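/- Let R be a ring equipped with an exhaustive increasing filtration 0 = F_{-1} ⊆ F_0 ⊆ F_1 ⊆ ⋯ by additive subgroups with 1 ∈ F_0, F_i·F_j ⊆ F_{i+j}, and ∪_i F_i = R, and suppose the associated graded ring gr R = ⊕_{i≥0} F_i/F_{i−1} is commutative and has no nonzero nilpotent elements. Let N ≥ 0 and let x ∈ R satisfy a monic equation x^m + f_1 x^{m−1} + ⋯ + f_m = 0 with all coefficients f_i ∈ F_N. Then x ∈ F_N. -/

import Mathlib

/-- Let `R` be a ring with an exhaustive increasing filtration
`F` (indexed by `ℤ`, with `F i = 0` for `i < 0`, `1 ∈ F 0`, `F i * F j ⊆ F (i+j)`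
and `⋃ i, F i = R`) whose associated graded ring is commutative (expressed
elementwise: commutators drop filtration degree) and has no nonzero nilpotent
elements (expressed elementwise: if the principal symbol of an element of `F n`
squares to zero, it is zero, i.e. `x ∈ F n` and `x * x ∈ F (2n - 1)` imply
`x ∈ F (n-1)`).  If `x ∈ R` satisfies a monic equation
`x ^ m + f 0 * x ^ (m-1) + ⋯ + f (m-1) = 0` with all coefficients `f i ∈ F N`,
then `x ∈ F N`. -/
theorem integral_element_mem_filtration
    (R : Type*) [Ring R] (F : ℤ → AddSubgroup R)
    (hneg : ∀ i : ℤ, i < 0 → F i = ⊥)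
    (hmono : Monotone F)
    (hone : (1 : R) ∈ F 0)
    (hmul : ∀ (i j : ℤ) (x y : R), x ∈ F i → y ∈ F j → x * y ∈ F (i + j))
    (hexh : ∀ x : R, ∃ i : ℤ, x ∈ F i)
    (hcomm : ∀ (i j : ℤ) (x y : R), x ∈ F i → y ∈ F j →
      x * y - y * x ∈ F (i + j - 1))
    (hred : ∀ (n : ℤ) (x : R), x ∈ F n → x * x ∈ F (2 * n - 1) → x ∈ F (n - 1))
    (N : ℤ) (hN : 0 ≤ N) (m : ℕ) (hm : 0 < m) (f : Fin m → R)
    (hf : ∀ i : Fin m, f i ∈ F N) (x : R)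
    (heq : x ^ m + ∑ i : Fin m, f i * x ^ (m - 1 - (i : ℕ)) = 0) :
    x ∈ F N := by
  -- powers lemma
  have hpow : ∀ (k : ℕ) (n : ℤ) (y : R), y ∈ F n → y ^ k ∈ F (k * n) := by
    intro k
    induction k with
    | zero => intro n y hy; simpa using hone
    | succ k ih =>
      intro n y hy
      have := hmul (k * n) n (y ^ k) y (ih n y hy) hy
      have e : ((k : ℤ) + 1) * n = (k : ℤ) * n + n := by ring
      rw [pow_succ]
      rw [show ((k+1 : ℕ) : ℤ) * n = (k : ℤ) * n + n by push_cast; ring]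
      exact this
  -- descent lemma via repeated squaring
  have hdesc : ∀ (k : ℕ) (d : ℤ) (y : R), y ∈ F d →
      y ^ (2 ^ k) ∈ F ((2 ^ k : ℕ) * d - 1) → y ∈ F (d - 1) := by
    intro k
    induction k with
    | zero => intro d y hy h; simpa using h
    | succ k ih =>
      intro d y hy h
      apply ih d y hy
      have hy2 : y ^ (2 ^ k) ∈ F ((2 ^ k : ℕ) * d) := hpow _ _ _ hy
      have hsq : y ^ (2 ^ k) * y ^ (2 ^ k) ∈ F (2 * ((2 ^ k : ℕ) * d) - 1) := by
        have : y ^ (2 ^ k) * y ^ (2 ^ k) = y ^ (2 ^ (k+1)) := by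
          rw [← pow_add]; ring_nf
        rw [this]
        convert h using 2
        push_cast [pow_succ]; ring
      have := hred _ _ hy2 hsq
      exact this
  -- step: if x ∈ F d with N < d then x ∈ F (d-1)
  have hstep : ∀ d : ℤ, N < d → x ∈ F d → x ∈ F (d - 1) := by
    intro d hd hx
    have hd0 : 0 ≤ d := le_trans hN hd.le
    -- x^m ∈ F (m*d - 1)
    have hxm : x ^ m ∈ F ((m : ℤ) * d - 1) := by
      have : x ^ m = -(∑ i : Fin m, f i * x ^ (m - 1 - (i : ℕ))) := by
        exact eq_neg_of_add_eq_zero_left heq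
      rw [this]
      apply neg_mem
      apply sum_mem
      intro i _
      have hterm : f i * x ^ (m - 1 - (i : ℕ)) ∈ F (N + ((m - 1 - (i : ℕ) : ℕ) : ℤ) * d) :=
        hmul _ _ _ _ (hf i) (hpow _ _ _ hx)
      apply hmono _ hterm
      have h1 : ((m - 1 - (i : ℕ) : ℕ) : ℤ) ≤ (m : ℤ) - 1 := by
        have : (m - 1 - (i : ℕ) : ℕ) ≤ m - 1 := Nat.sub_le _ _
        have h2 : ((m - 1 : ℕ) : ℤ) = (m : ℤ) - 1 := by
          omega
        calc ((m - 1 - (i : ℕ) : ℕ) : ℤ) ≤ ((m - 1 : ℕ) : ℤ) := by exact_mod_cast this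
          _ = (m : ℤ) - 1 := h2
      nlinarith [mul_le_mul_of_nonneg_right h1 hd0]
    -- lift to 2^m power
    have h2m : m ≤ 2 ^ m := Nat.le_of_lt (Nat.lt_two_pow_self (n := m))
    have hxpow : x ^ (2 ^ m) ∈ F ((2 ^ m : ℕ) * d - 1) := by
      have : x ^ (2 ^ m) = x ^ (2 ^ m - m) * x ^ m := by
        rw [← pow_add]; congr 1; omega
      rw [this]
      have := hmul _ _ _ _ (hpow (2 ^ m - m) d x hx) hxm
      convert this using 2
      have : ((2 ^ m - m : ℕ) : ℤ) = (2 ^ m : ℕ) - (m : ℤ) := by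
        push_cast [Nat.cast_sub h2m]; ring
      push_cast [Nat.cast_sub h2m]
      ring
    exact hdesc m d x hx hxpow
  -- descend from some F j, j ≥ N, down to N
  have key : ∀ n : ℕ, x ∈ F (N + n) → x ∈ F N := by
    intro n
    induction n with
    | zero => simpa using id
    | succ n ih =>
      intro hx
      apply ih
      have := hstep (N + (n+1 : ℕ)) (by push_cast; omega) hx
      convert this using 2
      push_cast; ring
  obtain ⟨i, hi⟩ := hexh x
  have hi' : x ∈ F (max i N) := hmono (le_max_left _ _) hi
  have : max i N = N + ((max i N - N).toNat : ℤ) := by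
    rw [Int.toNat_of_nonneg (by omega : (0:ℤ) ≤ max i N - N)]; ring
  exact key _ (this ▸ hi')
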